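/- Let I : ℝ^{d₀} → ℝ^{d₁} be a linear map all of whose singular values equal 1, and let g : ℝ^p × ℝ^{d₀} → ℝ^{d₁} be differentiable in the second variable with ‖J g(θ, x)‖₂ < 1 − δ for all (θ, x), where Jg is the Jacobian in x. Then the residual map f(θ, x) := I x + g(θ, x) satisfies σ_min(J f(θ, x)) > δ for all (θ, x). -/

import Mathlib

/-- The smallest singular value of a linear map into a space of no larger dimension,
i.e. the square root of the smallest eigenvalue of `L ∘ Lᵀ`, as the infimum of
`‖Lᵀ y‖` over unit vectors `y` in the codomain. -/
noncomputable def sminAdj {n m : ℕ}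
    (L : EuclideanSpace ℝ (Fin n) →L[ℝ] EuclideanSpace ℝ (Fin m)) : ℝ :=
  ⨅ y : Metric.sphere (0 : EuclideanSpace ℝ (Fin m)) 1,
    ‖ContinuousLinearMap.adjoint L (y : EuclideanSpace ℝ (Fin m))‖

theorem stmt8 {p d₀ d₁ : ℕ} (hd₁ : 0 < d₁) (hd : d₁ ≤ d₀) (δ : ℝ) (hδ : 0 < δ)
    (I : EuclideanSpace ℝ (Fin d₀) →L[ℝ] EuclideanSpace ℝ (Fin d₁))
    (hI : ∀ y, ‖ContinuousLinearMap.adjoint I y‖ = ‖y‖)  -- all singular values of `I` equal 1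
    (g : EuclideanSpace ℝ (Fin p) → EuclideanSpace ℝ (Fin d₀) → EuclideanSpace ℝ (Fin d₁))
    (hg : ∀ θ, Differentiable ℝ (g θ))
    (hJg : ∀ θ x, ‖fderiv ℝ (g θ) x‖ < 1 - δ) :
    ∀ θ x, δ < sminAdj (fderiv ℝ (fun x => I x + g θ x) x) := by
  intro θ x
  have hfd : fderiv ℝ (fun x => I x + g θ x) x = I + fderiv ℝ (g θ) x := by
    rw [fderiv_fun_add (I.differentiable.differentiableAt) ((hg θ).differentiableAt),
      I.fderiv]
  rw [hfd]
  haveI : Nontrivial (EuclideanSpace ℝ (Fin d₁)) := by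
    refine ⟨0, EuclideanSpace.single ⟨0, hd₁⟩ 1, fun h => ?_⟩
    have := congrArg (fun v : EuclideanSpace ℝ (Fin d₁) => v ⟨0, hd₁⟩) h
    simp at this
  haveI : Nonempty (Metric.sphere (0 : EuclideanSpace ℝ (Fin d₁)) 1) :=
    (NormedSpace.sphere_nonempty.mpr zero_le_one).to_subtype
  set B := fderiv ℝ (g θ) x
  have key : δ < 1 - ‖B‖ := by linarith [hJg θ x]
  refine lt_of_lt_of_le key (le_ciInf ?_)
  rintro ⟨y, hy⟩
  simp only [mem_sphere_iff_norm, sub_zero] at hy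
  have hadj : ContinuousLinearMap.adjoint (I + B) y
      = ContinuousLinearMap.adjoint I y + ContinuousLinearMap.adjoint B y := by
    rw [map_add]; rfl
  have h1 : ‖ContinuousLinearMap.adjoint I y‖ = 1 := by rw [hI y, hy]
  have h2 : ‖ContinuousLinearMap.adjoint B y‖ ≤ ‖B‖ := by
    calc ‖ContinuousLinearMap.adjoint B y‖ ≤ ‖ContinuousLinearMap.adjoint B‖ * ‖y‖ :=
          (ContinuousLinearMap.adjoint B).le_opNorm y
      _ = ‖B‖ := by rw [hy, mul_one]; exact ContinuousLinearMap.adjoint.norm_map B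
  have := norm_sub_norm_le (ContinuousLinearMap.adjoint I y)
    (-(ContinuousLinearMap.adjoint B y))
  simp only [sub_neg_eq_add, norm_neg] at this
  calc 1 - ‖B‖ ≤ ‖ContinuousLinearMap.adjoint I y‖ - ‖ContinuousLinearMap.adjoint B y‖ := by
        rw [h1]; linarith
    _ ≤ ‖ContinuousLinearMap.adjoint I y + ContinuousLinearMap.adjoint B y‖ := this
    _ = ‖ContinuousLinearMap.adjoint (I + B) y‖ := by rw [hadj]
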